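/- The restriction of the matrix exponential to i·su(2) (Hermitian traceless 2×2 matrices) is a bijection onto the set H³ = {a·a* : a ∈ SL(2,ℂ)} of positive definite Hermitian matrices of determinant 1. -/

import Mathlib

open Matrix

/-- The matrix exponential on `2×2` complex matrices. -/
noncomputable def mexp (A : Matrix (Fin 2) (Fin 2) ℂ) : Matrix (Fin 2) (Fin 2) ℂ :=
  letI : NormedRing (Matrix (Fin 2) (Fin 2) ℂ) := Matrix.linftyOpNormedRing
  letI : NormedAlgebra ℂ (Matrix (Fin 2) (Fin 2) ℂ) := Matrix.linftyOpNormedAlgebra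
  NormedSpace.exp A

lemma mexp_eq (A : Matrix (Fin 2) (Fin 2) ℂ) : mexp A = NormedSpace.exp A := rfl

lemma unitary_inv_eq_star (U : Matrix.unitaryGroup (Fin 2) ℂ) :
    (U : Matrix (Fin 2) (Fin 2) ℂ)⁻¹ = star (U : Matrix (Fin 2) (Fin 2) ℂ) :=
  Matrix.inv_eq_left_inv (Matrix.mem_unitaryGroup_iff'.mp U.2)

lemma mexp_unitary_conj (U : Matrix.unitaryGroup (Fin 2) ℂ) (v : Fin 2 → ℂ) :
    mexp ((U : Matrix (Fin 2) (Fin 2) ℂ) * Matrix.diagonal v * star (U : Matrix (Fin 2) (Fin 2) ℂ))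
      = (U : Matrix (Fin 2) (Fin 2) ℂ) * Matrix.diagonal (fun i => Complex.exp (v i)) *
        star (U : Matrix (Fin 2) (Fin 2) ℂ) := by
  rw [mexp_eq, ← unitary_inv_eq_star U,
    Matrix.exp_conj _ _ ((Matrix.isUnit_iff_isUnit_det _).mpr
      (isUnit_iff_ne_zero.mpr (fun h => by simpa [h] using (Matrix.det_of_mem_unitary U.2).2))),
    Matrix.exp_diagonal]
  congr 2
  have : NormedSpace.exp v = fun i => Complex.exp (v i) := by
    funext i
    rw [Complex.exp_eq_exp_ℂ]
    exact Pi.coe_exp v i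
  rw [this]

lemma rclike_ofReal_eq : (RCLike.ofReal : ℝ → ℂ) = Complex.ofReal := rfl

/-- auxiliary: `sinh t / t` extended by 1 at 0. -/
noncomputable def gfun (t : ℝ) : ℝ := if t = 0 then 1 else Real.sinh t / t

lemma gfun_pos {t : ℝ} (ht : 0 ≤ t) : 0 < gfun t := by
  rcases eq_or_lt_of_le ht with h | h
  · simp [gfun, ← h]
  · rw [gfun, if_neg h.ne']
    exact div_pos (Real.sinh_pos_iff.mpr h) h

lemma real_key (x : ℝ) : Real.exp x = Real.cosh |x| + gfun |x| * x := by
  rcases eq_or_ne x 0 with h | h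
  · simp [h, gfun]
  · have hg : gfun |x| = Real.sinh x / x := by
      rw [gfun, if_neg (abs_ne_zero.mpr h)]
      rcases lt_or_gt_of_ne h with hx | hx
      · rw [abs_of_neg hx, Real.sinh_neg, neg_div_neg_eq]
      · rw [abs_of_pos hx]
    rw [hg, Real.cosh_abs, div_mul_cancel₀ _ h, Real.cosh_add_sinh]

lemma trace_eq_sum_ev {A : Matrix (Fin 2) (Fin 2) ℂ} (hA : A.IsHermitian) :
    A.trace = (hA.eigenvalues 0 : ℂ) + (hA.eigenvalues 1 : ℂ) := by
  conv_lhs => rw [hA.spectral_theorem, Unitary.conjStarAlgAut_apply]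
  rw [Matrix.trace_mul_cycle, Matrix.mem_unitaryGroup_iff'.mp hA.eigenvectorUnitary.2, one_mul,
    Matrix.trace_diagonal, Fin.sum_univ_two]
  rfl

lemma mexp_formula {A : Matrix (Fin 2) (Fin 2) ℂ} (hH : A.IsHermitian) (htr : A.trace = 0) :
    ∃ t : ℝ, 0 ≤ t ∧ mexp A = (Real.cosh t : ℂ) • 1 + (gfun t : ℂ) • A := by
  set U := hH.eigenvectorUnitary with hU
  set ev := hH.eigenvalues with hev
  have hsum : ev 1 = -(ev 0) := by
    have h1 := trace_eq_sum_ev hH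
    rw [htr] at h1
    have : ((ev 0 + ev 1 : ℝ) : ℂ) = 0 := by push_cast; exact h1.symm
    have h2 : ev 0 + ev 1 = 0 := by exact_mod_cast this
    linarith
  refine ⟨|ev 0|, abs_nonneg _, ?_⟩
  have hdiag : Matrix.diagonal (fun i => Complex.exp ((RCLike.ofReal ∘ ev) i))
      = (Real.cosh |ev 0| : ℂ) • (1 : Matrix (Fin 2) (Fin 2) ℂ)
        + (gfun |ev 0| : ℂ) • Matrix.diagonal (RCLike.ofReal ∘ ev) := by
    rw [← Matrix.diagonal_one, ← Matrix.diagonal_smul, ← Matrix.diagonal_smul,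
      Matrix.diagonal_add]
    refine congrArg Matrix.diagonal (funext fun i => ?_)
    simp only [Pi.add_apply, Pi.smul_apply, Function.comp_apply, smul_eq_mul, mul_one]
    have key : ∀ y : ℝ, |y| = |ev 0| →
        Complex.exp ((y:ℝ) : ℂ) = (Real.cosh |ev 0| : ℂ) + (gfun |ev 0| : ℂ) * (y : ℂ) := by
      intro y hy
      rw [← Complex.ofReal_exp, real_key y, hy]
      push_cast
      ring
    match i with
    | 0 => exact key (ev 0) rfl
    | 1 =>
      rw [show ev 1 = -(ev 0) from hsum]
      exact key (-(ev 0)) (abs_neg _)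
  conv_lhs => rw [hH.spectral_theorem, Unitary.conjStarAlgAut_apply]
  rw [mexp_unitary_conj U (RCLike.ofReal ∘ ev), hdiag, Matrix.mul_add, Matrix.add_mul,
    Matrix.mul_smul, Matrix.smul_mul, Matrix.mul_smul, Matrix.smul_mul, Matrix.mul_one,
    Matrix.mem_unitaryGroup_iff.mp U.2]
  exact congrArg (fun X => (Real.cosh |ev 0| : ℂ) • (1 : Matrix (Fin 2) (Fin 2) ℂ) + (gfun |ev 0| : ℂ) • X)
    hH.spectral_theorem.symm

lemma mexp_injOn : Set.InjOn mexp {A : Matrix (Fin 2) (Fin 2) ℂ | Aᴴ = A ∧ A.trace = 0} := by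
  rintro A ⟨hAh, hAt⟩ B ⟨hBh, hBt⟩ hAB
  obtain ⟨s, hs0, hsA⟩ := mexp_formula hAh hAt
  obtain ⟨t, ht0, htB⟩ := mexp_formula hBh hBt
  have hkey : (Real.cosh s : ℂ) • (1 : Matrix (Fin 2) (Fin 2) ℂ) + (gfun s : ℂ) • A
      = (Real.cosh t : ℂ) • 1 + (gfun t : ℂ) • B := by rw [← hsA, ← htB, hAB]
  have htrace := congrArg Matrix.trace hkey
  simp only [Matrix.trace_add, Matrix.trace_smul, Matrix.trace_one, hAt, hBt, smul_zero,
    add_zero, smul_eq_mul] at htrace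
  have hcosh : Real.cosh s = Real.cosh t := by
    have h2 : ((Real.cosh s : ℂ)) = (Real.cosh t : ℂ) := by
      simp only [Fintype.card_fin, Nat.cast_ofNat, mul_zero, add_zero, zero_mul] at htrace
      linear_combination htrace / 2
    exact_mod_cast h2
  have hst : s = t := by
    by_contra h
    rcases lt_or_gt_of_ne h with hlt | hlt
    · exact absurd hcosh (ne_of_lt (Real.cosh_lt_cosh.mpr
        (by rwa [abs_of_nonneg hs0, abs_of_nonneg ht0])))
    · exact absurd hcosh (ne_of_gt (Real.cosh_lt_cosh.mpr
        (by rwa [abs_of_nonneg hs0, abs_of_nonneg ht0])))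
  subst hst
  have h3 : (gfun s : ℂ) • A = (gfun s : ℂ) • B := add_left_cancel hkey
  have hg : (gfun s : ℂ) ≠ 0 := by exact_mod_cast (gfun_pos hs0).ne'
  exact smul_right_injective (Matrix (Fin 2) (Fin 2) ℂ) hg h3

lemma ev_one_eq_neg {A : Matrix (Fin 2) (Fin 2) ℂ} (hH : A.IsHermitian) (htr : A.trace = 0) :
    hH.eigenvalues 1 = -(hH.eigenvalues 0) := by
  have h1 := trace_eq_sum_ev hH
  rw [htr] at h1
  have : ((hH.eigenvalues 0 + hH.eigenvalues 1 : ℝ) : ℂ) = 0 := by push_cast; exact h1.symm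
  have h2 : hH.eigenvalues 0 + hH.eigenvalues 1 = 0 := by exact_mod_cast this
  linarith

lemma mexp_mapsTo {A : Matrix (Fin 2) (Fin 2) ℂ} (hH : A.IsHermitian) (htr : A.trace = 0) :
    ∃ a : Matrix (Fin 2) (Fin 2) ℂ, a.det = 1 ∧ mexp A = a * aᴴ := by
  set U := hH.eigenvectorUnitary with hU
  set ev := hH.eigenvalues with hev
  have hsum : ev 1 = -(ev 0) := ev_one_eq_neg hH htr
  set w : Fin 2 → ℂ := fun i => Complex.exp (((ev i / 2 : ℝ)) : ℂ) with hw
  have hstarw : star w = w := by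
    funext i
    simp only [Pi.star_def, hw, RCLike.star_def, ← Complex.exp_conj, Complex.conj_ofReal]
  set a₀ : Matrix (Fin 2) (Fin 2) ℂ := (U : Matrix (Fin 2) (Fin 2) ℂ) * Matrix.diagonal w
    with ha₀
  have ha₀H : a₀ᴴ = Matrix.diagonal w * star (U : Matrix (Fin 2) (Fin 2) ℂ) := by
    rw [ha₀, Matrix.conjTranspose_mul, Matrix.diagonal_conjTranspose, hstarw,
      Matrix.star_eq_conjTranspose]
  have hmul : mexp A = a₀ * a₀ᴴ := by
    conv_lhs => rw [hH.spectral_theorem, Unitary.conjStarAlgAut_apply]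
    rw [mexp_unitary_conj U (RCLike.ofReal ∘ ev), ha₀H, ha₀]
    have hfn : (fun i => Complex.exp ((RCLike.ofReal ∘ ev) i)) = fun i => w i * w i := by
      funext i
      rw [hw, ← Complex.exp_add, ← Complex.ofReal_add]
      norm_num
    rw [hfn, ← Matrix.diagonal_mul_diagonal]
    simp only [mul_assoc]
  have hdet₀ : a₀.det = (U : Matrix (Fin 2) (Fin 2) ℂ).det := by
    rw [ha₀, Matrix.det_mul, Matrix.det_diagonal, Fin.prod_univ_two, hw]
    have hz : ((ev 0 / 2 : ℝ) : ℂ) + ((ev 1 / 2 : ℝ) : ℂ) = 0 := by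
      push_cast [hsum]; ring
    rw [← Complex.exp_add, hz, Complex.exp_zero, mul_one]
  set e : ℂ := (U : Matrix (Fin 2) (Fin 2) ℂ).det with he
  have heu : star e * e = 1 := (Matrix.det_of_mem_unitary U.2).1
  have heu' : e * star e = 1 := (Matrix.det_of_mem_unitary U.2).2
  obtain ⟨sc, hsc⟩ := IsAlgClosed.exists_pow_nat_eq (star e) (n := 2) (by norm_num)
  have hns : star sc * sc = 1 := by
    have hsq : (star sc * sc) ^ 2 = 1 := by
      calc (star sc * sc) ^ 2 = star (sc ^ 2) * sc ^ 2 := by rw [star_pow]; ring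
        _ = star (star e) * star e := by rw [hsc]
        _ = e * star e := by rw [star_star]
        _ = 1 := heu'
    have hre : star sc * sc = (Complex.normSq sc : ℂ) := by
      rw [mul_comm]; exact Complex.mul_conj sc
    rw [hre] at hsq ⊢
    have h4 : (Complex.normSq sc : ℝ) ^ 2 = 1 := by exact_mod_cast hsq
    have h5 : (Complex.normSq sc : ℝ) = 1 := by nlinarith [Complex.normSq_nonneg sc]
    rw [h5, Complex.ofReal_one]
  refine ⟨sc • a₀, ?_, ?_⟩
  · rw [Matrix.det_smul, hdet₀, Fintype.card_fin, hsc]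
    exact heu
  · rw [Matrix.conjTranspose_smul, Matrix.smul_mul, Matrix.mul_smul, smul_smul,
      mul_comm sc, hns, one_smul]
    exact hmul

lemma mexp_surj {m a : Matrix (Fin 2) (Fin 2) ℂ} (hdet : a.det = 1) (hm : m = a * aᴴ) :
    ∃ A : Matrix (Fin 2) (Fin 2) ℂ, (Aᴴ = A ∧ A.trace = 0) ∧ mexp A = m := by
  subst hm
  have hmH : (a * aᴴ).IsHermitian := Matrix.isHermitian_mul_conjTranspose_self a
  have hnn : ∀ i, 0 ≤ hmH.eigenvalues i := fun i =>
    Matrix.eigenvalues_self_mul_conjTranspose_nonneg a i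
  have hdetm : (a * aᴴ).det = 1 := by
    rw [Matrix.det_mul, Matrix.det_conjTranspose, hdet]
    simp
  have hprod : hmH.eigenvalues 0 * hmH.eigenvalues 1 = 1 := by
    have h := hmH.det_eq_prod_eigenvalues
    rw [hdetm, Fin.prod_univ_two] at h
    have h2 : ((hmH.eigenvalues 0 * hmH.eigenvalues 1 : ℝ) : ℂ) = 1 := by
      push_cast
      exact h.symm
    exact_mod_cast h2
  have h0 : 0 < hmH.eigenvalues 0 :=
    lt_of_le_of_ne (hnn 0) (Ne.symm (left_ne_zero_of_mul_eq_one hprod))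
  have h1 : 0 < hmH.eigenvalues 1 :=
    lt_of_le_of_ne (hnn 1) (Ne.symm (right_ne_zero_of_mul_eq_one hprod))
  refine ⟨(hmH.eigenvectorUnitary : Matrix (Fin 2) (Fin 2) ℂ) *
      Matrix.diagonal (fun i => ((Real.log (hmH.eigenvalues i) : ℝ) : ℂ)) *
      star (hmH.eigenvectorUnitary : Matrix (Fin 2) (Fin 2) ℂ), ⟨?_, ?_⟩, ?_⟩
  · have hst : star (fun i => ((Real.log (hmH.eigenvalues i) : ℝ) : ℂ))
        = fun i => ((Real.log (hmH.eigenvalues i) : ℝ) : ℂ) := by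
      funext i
      exact Complex.conj_ofReal _
    rw [Matrix.star_eq_conjTranspose, Matrix.conjTranspose_mul, Matrix.conjTranspose_mul,
      Matrix.conjTranspose_conjTranspose, Matrix.diagonal_conjTranspose, hst, ← mul_assoc]
  · rw [Matrix.trace_mul_cycle, Matrix.mem_unitaryGroup_iff'.mp hmH.eigenvectorUnitary.2,
      one_mul, Matrix.trace_diagonal, Fin.sum_univ_two, ← Complex.ofReal_add,
      ← Real.log_mul h0.ne' h1.ne', hprod, Real.log_one, Complex.ofReal_zero]
  · rw [mexp_unitary_conj hmH.eigenvectorUnitary]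
    have hfn : (fun i => Complex.exp ((Real.log (hmH.eigenvalues i) : ℝ) : ℂ))
        = (RCLike.ofReal ∘ hmH.eigenvalues) := by
      funext i
      rw [← Complex.ofReal_exp, Real.exp_log (by fin_cases i <;> assumption)]
      rfl
    rw [hfn]
    exact hmH.spectral_theorem.symm

theorem exp_bijOn_hermitian_traceless :
    Set.BijOn mexp
      {A : Matrix (Fin 2) (Fin 2) ℂ | Aᴴ = A ∧ A.trace = 0}
      {m : Matrix (Fin 2) (Fin 2) ℂ | ∃ a : Matrix (Fin 2) (Fin 2) ℂ,
        a.det = 1 ∧ m = a * aᴴ} := by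
  refine ⟨?_, mexp_injOn, ?_⟩
  · rintro A ⟨hAh, hAt⟩
    obtain ⟨a, hd, hme⟩ := mexp_mapsTo hAh hAt
    exact ⟨a, hd, hme⟩
  · rintro m ⟨a, hdet, hm⟩
    obtain ⟨A, hA, hAe⟩ := mexp_surj hdet hm
    exact ⟨A, hA, hAe⟩
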